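/- For coprime positive integers P, Q with Q odd and P even, ∏_{j=1}^{Q} 2cos(jπP/Q + κ) = (−1)^{P(Q+1)/2} · 2cos(Qκ) for all real κ. -/

import Mathlib

open Finset

/-- Evaluation of `∏ (a - ζ^j)` for a primitive root `ζ`. -/
lemma prod_a_sub_pow_root {n : ℕ} (hn : 0 < n) {ζ : ℂ} (hζ : IsPrimitiveRoot ζ n) (a : ℂ) :
    ∏ j ∈ Finset.range n, (a - ζ ^ j) = a ^ n - 1 := by
  have h := Polynomial.X_pow_sub_one_eq_prod hn hζ
  have h2 := congrArg (Polynomial.eval a) h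
  simp only [Polynomial.eval_sub, Polynomial.eval_pow, Polynomial.eval_X, Polynomial.eval_one,
    Polynomial.eval_prod, Polynomial.eval_C] at h2
  rw [h2]
  apply Finset.prod_nbij (fun j => ζ ^ j)
  · intro j hj
    exact (Polynomial.mem_nthRootsFinset hn _).2
      (by rw [← pow_mul, mul_comm, pow_mul, hζ.pow_eq_one, one_pow])
  · intro i hi j hj hij
    simp only [Finset.coe_range, Set.mem_Iio] at hi hj
    exact hζ.pow_inj hi hj hij
  · intro μ hμ
    have : NeZero n := ⟨hn.ne'⟩
    obtain ⟨j, hj, hje⟩ := hζ.eq_pow_of_pow_eq_one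
      ((Polynomial.mem_nthRootsFinset hn _).1 hμ)
    exact ⟨j, by simpa using hj, hje⟩
  · intros; rfl

lemma prod_pow_add_root {Q : ℕ} (hQ : 0 < Q) (hQodd : Odd Q) {ζ : ℂ}
    (hζ : IsPrimitiveRoot ζ Q) (b : ℂ) :
    ∏ j ∈ Finset.range Q, (ζ ^ j + b) = b ^ Q + 1 := by
  have h := prod_a_sub_pow_root hQ hζ (-b)
  have h1 : ∀ j ∈ Finset.range Q, ζ ^ j + b = (-1) * (-b - ζ ^ j) := by intro j _; ring
  rw [Finset.prod_congr rfl h1, Finset.prod_mul_distrib, Finset.prod_const, Finset.card_range,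
    h, hQodd.neg_one_pow, hQodd.neg_pow]
  ring

lemma prod_cos_core {Q : ℕ} (hQ : 0 < Q) (hQodd : Odd Q) {c : ℂ} (hc : IsPrimitiveRoot c Q)
    (w : ℂ) (hw : w ≠ 0) :
    ∏ j ∈ Finset.range Q, (c ^ j * w + (c ^ j * w)⁻¹) = w ^ Q + (w ^ Q)⁻¹ := by
  have hc0 : c ≠ 0 := hc.ne_zero hQ.ne'
  have hc2 : IsPrimitiveRoot (c ^ 2) Q := hc.pow_of_coprime 2 hQodd.coprime_two_left
  have key : ∀ j ∈ Finset.range Q,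
      c ^ j * w + (c ^ j * w)⁻¹ = (c ^ j)⁻¹ * (w * ((c ^ 2) ^ j + w⁻¹ ^ 2)) := by
    intro j _
    have hcj : c ^ j ≠ 0 := pow_ne_zero _ hc0
    field_simp
    ring
  rw [Finset.prod_congr rfl key, Finset.prod_mul_distrib, Finset.prod_inv_distrib,
    Finset.prod_mul_distrib, Finset.prod_const, Finset.card_range,
    prod_pow_add_root hQ hQodd hc2, Finset.prod_pow_eq_pow_sum]
  -- ∑ j < Q, j is a multiple of Q since Q is odd
  obtain ⟨t, rfl⟩ := hQodd
  have hsum : ∑ i ∈ Finset.range (2 * t + 1), i = (2 * t + 1) * t := by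
    have h1 := Finset.sum_range_id_mul_two (2 * t + 1)
    have h2 : (2 * t + 1) * (2 * t + 1 - 1) = (2 * t + 1) * t * 2 := by
      have h3 : 2 * t + 1 - 1 = 2 * t := by omega
      rw [h3]; ring
    omega
  rw [hsum, pow_mul, hc.pow_eq_one, one_pow, inv_one, one_mul]
  field_simp
  have hx : w ^ 2 * w ^ (t * 4) * w⁻¹ ^ 2 * w⁻¹ ^ (t * 4) = 1 := by
    rw [show w ^ 2 * w ^ (t * 4) * w⁻¹ ^ 2 * w⁻¹ ^ (t * 4) = (w * w⁻¹) ^ 2 * (w * w⁻¹) ^ (t * 4) by ring,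
      mul_inv_cancel₀ hw, one_pow, one_pow, one_mul]
  linear_combination hx

/-- For coprime `P`, `Q` with `Q` odd and `P` even,
`∏_{j=1}^{Q} 2cos(jπP/Q + κ) = (−1)^{P(Q+1)/2} · 2cos(Qκ)`. -/
theorem prod_two_cos_odd_even (P Q : ℕ) (hP : 0 < P) (hQ : 0 < Q)
    (hco : Nat.Coprime P Q) (hQodd : Odd Q) (hPeven : Even P) (κ : ℝ) :
    ∏ j ∈ Finset.Icc 1 Q,
        (2 * Real.cos ((j : ℝ) * Real.pi * (P : ℝ) / (Q : ℝ) + κ)) =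
      (-1 : ℝ) ^ (P * (Q + 1) / 2) * (2 * Real.cos ((Q : ℝ) * κ)) := by
  obtain ⟨m, hm⟩ := hPeven
  have hsign : (-1 : ℝ) ^ (P * (Q + 1) / 2) = 1 := by
    have h0 : P * (Q + 1) = m * (Q + 1) * 2 := by subst hm; ring
    have h1 : P * (Q + 1) / 2 = m * (Q + 1) := by omega
    rw [h1]
    obtain ⟨t, ht⟩ := hQodd
    exact Even.neg_one_pow ⟨m * (t + 1), by subst ht; ring⟩
  rw [hsign, one_mul]
  have hQC : (Q : ℂ) ≠ 0 := Nat.cast_ne_zero.2 hQ.ne'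
  have hm' : Nat.Coprime m Q := Nat.Coprime.coprime_dvd_left ⟨2, by omega⟩ hco
  set c : ℂ := Complex.exp (2 * Real.pi * Complex.I * ((m : ℂ) / (Q : ℂ))) with hcdef
  have hc : IsPrimitiveRoot c Q := Complex.isPrimitiveRoot_exp_of_coprime m Q hQ.ne' hm'
  set w : ℂ := Complex.exp ((κ : ℂ) * Complex.I) with hwdef
  have hw : w ≠ 0 := Complex.exp_ne_zero _
  have hcpow : ∀ j : ℕ, Complex.exp (((j : ℂ) * (Real.pi : ℂ) * (P : ℂ) / (Q : ℂ)) * Complex.I)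
      = c ^ j := by
    intro j
    rw [hcdef, ← Complex.exp_nat_mul]
    congr 1
    have hp : (P : ℂ) = 2 * (m : ℂ) := by push_cast [hm]; ring
    rw [hp]
    field_simp
  have hterm : ∀ j ∈ Finset.Icc 1 Q,
      2 * Complex.cos ((j : ℂ) * (Real.pi : ℂ) * (P : ℂ) / (Q : ℂ) + (κ : ℂ))
        = c ^ j * w + (c ^ j * w)⁻¹ := by
    intro j _
    rw [Complex.two_cos, neg_mul, Complex.exp_neg, add_mul, Complex.exp_add, hcpow j, hwdef]
  have main : ∏ j ∈ Finset.Icc 1 Q,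
      (2 * Complex.cos ((j : ℂ) * (Real.pi : ℂ) * (P : ℂ) / (Q : ℂ) + (κ : ℂ)))
        = 2 * Complex.cos ((Q : ℂ) * (κ : ℂ)) := by
    rw [Finset.prod_congr rfl hterm, ← Finset.Ico_add_one_right_eq_Icc, Finset.prod_Ico_eq_prod_range]
    simp only [Nat.add_sub_cancel]
    have hshift : ∀ i ∈ Finset.range Q, c ^ (1 + i) * w + (c ^ (1 + i) * w)⁻¹
        = c ^ i * (c * w) + (c ^ i * (c * w))⁻¹ := by
      intro i _
      rw [pow_add, pow_one]
      ring_nf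
    rw [Finset.prod_congr rfl hshift,
      prod_cos_core hQ hQodd hc (c * w) (mul_ne_zero (hc.ne_zero hQ.ne') hw),
      mul_pow, hc.pow_eq_one, one_mul]
    rw [Complex.two_cos, neg_mul, Complex.exp_neg, hwdef, ← Complex.exp_nat_mul]
    ring_nf
  apply Complex.ofReal_injective
  push_cast [Complex.ofReal_cos]
  exact main
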